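/- arXiv:1603.06658 — 3 statements merged into one kernel-verified Lean document; each statement's English description precedes it below -/
import Mathlib

section
/- For every n ≥ 1, every bilinear algorithm for the n×n symmetric matrix-vector product has length at least n(n+1)/2: if u_1,…,u_r : ℂ^N → ℂ (N = n(n+1)/2) and ψ_1,…,ψ_r : ℂⁿ → ℂ are linear functionals and w_1,…,w_r ∈ ℂⁿ are vectors such that for every s ∈ ℂ^N and v ∈ ℂⁿ the symmetric matrix S represented by s satisfies S·v = Σ_{j=1}^{r} u_j(s)·ψ_j(v)·w_j, then r ≥ n(n+1)/2. Hence the bilinear complexity of the symmetric matrix-vector product is exactly n(n+1)/2. -/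
/-- The symmetric `n × n` matrix represented by the vector `s` of its
upper-triangular entries (indexed by pairs `(i, j)` with `i ≤ j`). -/
def symOfUpper (n : ℕ) (s : {p : Fin n × Fin n // p.1 ≤ p.2} → ℂ) :
    Matrix (Fin n) (Fin n) ℂ :=
  Matrix.of fun i j =>
    if h : i ≤ j then s ⟨(i, j), h⟩ else s ⟨(j, i), (le_total i j).resolve_left h⟩

/-- every bilinear algorithm for the `n × n` symmetric matrix-vector
product has length at least `n(n+1)/2`; hence the bilinear complexity is exactly
`n(n+1)/2`. -/
theorem symmetric_bilinear_algorithm_lower_bound (n : ℕ) (hn : 1 ≤ n) (r : ℕ)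
    (u : Fin r → ({p : Fin n × Fin n // p.1 ≤ p.2} → ℂ) →ₗ[ℂ] ℂ)
    (ψ : Fin r → (Fin n → ℂ) →ₗ[ℂ] ℂ)
    (w : Fin r → Fin n → ℂ)
    (h : ∀ (s : {p : Fin n × Fin n // p.1 ≤ p.2} → ℂ) (v : Fin n → ℂ),
      (symOfUpper n s).mulVec v = ∑ j : Fin r, (u j s * ψ j v) • w j) :
    n * (n + 1) / 2 ≤ r := by
  classical
  let A : ({p : Fin n × Fin n // p.1 ≤ p.2} → ℂ) →ₗ[ℂ] (Fin r → ℂ) :=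
    { toFun := fun s j => u j s
      map_add' := by intro x y; funext j; simp
      map_smul' := by intro c x; funext j; simp }
  have hinj : Function.Injective A := by
    rw [← LinearMap.ker_eq_bot, LinearMap.ker_eq_bot']
    intro s hs
    have hu : ∀ k, u k s = 0 := fun k => congrFun hs k
    funext p
    obtain ⟨⟨i, j⟩, hij⟩ := p
    have hv : (symOfUpper n s).mulVec (Pi.single j 1) = 0 := by
      rw [h s]
      apply Finset.sum_eq_zero
      intro k _
      simp [hu k]
    have hentry := congrFun hv i
    rw [Matrix.mulVec_single] at hentry
    simpa [symOfUpper, hij] using hentry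
  have hle := LinearMap.finrank_le_finrank_of_injective hinj
  have hdom : Module.finrank ℂ ({p : Fin n × Fin n // p.1 ≤ p.2} → ℂ)
      = n * (n + 1) / 2 := by
    rw [Module.finrank_pi]
    rw [← Fintype.card_congr (Sym2.sortEquiv (α := Fin n)), Sym2.card]
    simp [Nat.choose_two_right, Nat.mul_comm]
  have hcod : Module.finrank ℂ (Fin r → ℂ) = r := by simp
  rw [hdom, hcod] at hle
  exact hle
end

section
/- For every n ≥ 2 there exist linear functionals u_1,…,u_{4n−3} : ℂ^{2n−1} × ℂ^{2n−1} → ℂ, linear functionals ψ_1,…,ψ_{4n−3} : ℂⁿ → ℂ, and vectors w_1,…,w_{4n−3} ∈ ℂⁿ such that for every t, h ∈ ℂ^{2n−1} and every v ∈ ℂⁿ, the Toeplitz-plus-Hankel matrix X = T + H (with T the Toeplitz matrix represented by t and H the Hankel matrix represented by h) satisfies X·v = Σ_{j=1}^{4n−3} u_j(t,h)·ψ_j(v)·w_j. That is, the n×n Toeplitz-plus-Hankel matrix-vector product admits a bilinear algorithm of length 4n−3. -/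
/-- The `n × n` Toeplitz matrix represented by `t ∈ ℂ^(2n-1)`:
in 1-based indexing `T i j = t (j - i + n)`. -/
def toeplitzMat (n : ℕ) (t : Fin (2 * n - 1) → ℂ) : Matrix (Fin n) (Fin n) ℂ :=
  Matrix.of fun i j =>
    t ⟨j.val + (n - 1) - i.val, by have hi := i.isLt; have hj := j.isLt; omega⟩

/-- The `n × n` Hankel matrix represented by `h ∈ ℂ^(2n-1)`:
in 1-based indexing `H i j = h (2n + 1 - i - j)`. -/
def hankelMat (n : ℕ) (h : Fin (2 * n - 1) → ℂ) : Matrix (Fin n) (Fin n) ℂ :=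
  Matrix.of fun i j =>
    h ⟨2 * n - 2 - i.val - j.val, by have hi := i.isLt; have hj := j.isLt; omega⟩

open Finset

/-- primitive `(2n-1)`-th root of unity -/
noncomputable def zetaRt (n : ℕ) : ℂ :=
  Complex.exp (2 * Real.pi * Complex.I / ((2 * n - 1 : ℕ) : ℂ))

lemma zetaRt_ne_zero (n : ℕ) : zetaRt n ≠ 0 := Complex.exp_ne_zero _

lemma rootSum (m : ℕ) (hm : m ≠ 0) (d : ℤ) :
    ∑ k ∈ Finset.range m, Complex.exp (2 * Real.pi * Complex.I / (m : ℂ)) ^ ((k : ℤ) * d)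
      = if (m : ℤ) ∣ d then (m : ℂ) else 0 := by
  have hζ := Complex.isPrimitiveRoot_exp m hm
  set ζ := Complex.exp (2 * Real.pi * Complex.I / (m : ℂ)) with hzd
  have hpow : ∀ k : ℕ, ζ ^ ((k : ℤ) * d) = (ζ ^ d) ^ k := by
    intro k
    rw [mul_comm, zpow_mul, zpow_natCast]
  simp_rw [hpow]
  by_cases hdvd : (m : ℤ) ∣ d
  · rw [if_pos hdvd, (hζ.zpow_eq_one_iff_dvd d).mpr hdvd]
    simp
  · have h1 : ζ ^ d ≠ 1 := fun hc => hdvd ((hζ.zpow_eq_one_iff_dvd d).mp hc)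
    rw [if_neg hdvd, geom_sum_eq h1]
    have hm1 : (ζ ^ d) ^ m = 1 := by
      rw [← zpow_natCast (ζ ^ d), ← zpow_mul, mul_comm, zpow_mul, zpow_natCast,
        hζ.pow_eq_one, one_zpow]
    rw [hm1, sub_self, zero_div]

lemma zetaRootSum (n : ℕ) (hn : 2 ≤ n) (d : ℤ) :
    ∑ k ∈ Finset.range (2 * n - 1), zetaRt n ^ ((k : ℤ) * d)
      = if ((2 * n - 1 : ℕ) : ℤ) ∣ d then ((2 * n - 1 : ℕ) : ℂ) else 0 := by
  have hm : (2 * n - 1) ≠ 0 := by omega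
  simpa [zetaRt] using rootSum (2 * n - 1) hm d

/-- generic linear functional: `x ↦ ∑ s, c s * x (σ s)` -/
noncomputable def lf2 {ι κ : Type*} [Fintype ι] (c : ι → ℂ) (σ : ι → κ) :
    (κ → ℂ) →ₗ[ℂ] ℂ :=
  ∑ s, c s • (LinearMap.proj (σ s) : (κ → ℂ) →ₗ[ℂ] ℂ)

lemma lf2_apply {ι κ : Type*} [Fintype ι] (c : ι → ℂ) (σ : ι → κ) (x : κ → ℂ) :
    lf2 c σ x = ∑ s, c s * x (σ s) := by
  simp [lf2]

/-- index map for the Toeplitz circulant embedding -/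
def aidx (n : ℕ) (l : Fin (2 * n - 1)) : Fin (2 * n - 1) :=
  ⟨(n - 1 + (2 * n - 1) - l.val) % (2 * n - 1),
    Nat.mod_lt _ (by have := l.isLt; omega)⟩

/-- index map for the Hankel part -/
def bidx (n : ℕ) (l : Fin (2 * n - 1)) : Fin (2 * n - 1) :=
  ⟨2 * n - 2 - l.val, by have := l.isLt; omega⟩

lemma int_pin2 (m : ℕ) (hm : 0 < m) (x c : ℤ) (hx : x = (m : ℤ) * c)
    (hlb : -(m : ℤ) < x) (hub : x < 2 * (m : ℤ)) : x = 0 ∨ x = (m : ℤ) := by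
  have hmZ : (0 : ℤ) < (m : ℤ) := by exact_mod_cast hm
  have hc2 : c < 2 := by
    have h1 : (m : ℤ) * c < (m : ℤ) * 2 := by rw [← hx]; linarith
    exact lt_of_mul_lt_mul_left h1 (le_of_lt hmZ)
  have hc0 : -1 < c := by
    have h1 : (m : ℤ) * (-1) < (m : ℤ) * c := by rw [← hx]; linarith
    exact lt_of_mul_lt_mul_left h1 (le_of_lt hmZ)
  have hcc : c = 0 ∨ c = 1 := by omega
  rcases hcc with rfl | rfl
  · left; rw [hx, mul_zero]
  · right; rw [hx, mul_one]

lemma lemA (n : ℕ) (hn : 2 ≤ n) (t : Fin (2 * n - 1) → ℂ) (v : Fin n → ℂ) (i : Fin n) :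
    ∑ k ∈ Finset.range (2 * n - 1),
      (∑ l : Fin (2 * n - 1), zetaRt n ^ (l.val * k) * t (aidx n l)) *
        (∑ j : Fin n, zetaRt n ^ (j.val * k) * v j) *
          (((2 * n - 1 : ℕ) : ℂ)⁻¹ * zetaRt n ^ (-((i.val * k : ℕ)) : ℤ))
    = ∑ j : Fin n,
        t ⟨j.val + (n - 1) - i.val, by have := j.isLt; have := i.isLt; omega⟩ * v j := by
  have hm : (2 * n - 1) ≠ 0 := by omega
  have hmC : ((2 * n - 1 : ℕ) : ℂ) ≠ 0 := Nat.cast_ne_zero.mpr hm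
  have hζ0 : zetaRt n ≠ 0 := zetaRt_ne_zero n
  have step1 : ∀ k ∈ Finset.range (2 * n - 1),
      (∑ l : Fin (2 * n - 1), zetaRt n ^ (l.val * k) * t (aidx n l)) *
        (∑ j : Fin n, zetaRt n ^ (j.val * k) * v j) *
          (((2 * n - 1 : ℕ) : ℂ)⁻¹ * zetaRt n ^ (-((i.val * k : ℕ)) : ℤ))
      = ∑ l : Fin (2 * n - 1), ∑ j : Fin n,
          t (aidx n l) * v j * ((2 * n - 1 : ℕ) : ℂ)⁻¹ *
              zetaRt n ^ ((k : ℤ) * ((l.val : ℤ) + (j.val : ℤ) - (i.val : ℤ))) := by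
    intro k _
    rw [Finset.sum_mul_sum, Finset.sum_mul]
    refine Finset.sum_congr rfl fun l _ => ?_
    rw [Finset.sum_mul]
    refine Finset.sum_congr rfl fun j _ => ?_
    have hexp : ((k : ℤ) * ((l.val : ℤ) + (j.val : ℤ) - (i.val : ℤ)))
        = ((l.val * k : ℕ) : ℤ) + (((j.val * k : ℕ) : ℤ) + (-((i.val * k : ℕ)) : ℤ)) := by
      push_cast; ring
    rw [hexp, zpow_add₀ hζ0, zpow_add₀ hζ0, zpow_natCast, zpow_natCast]
    ring
  rw [Finset.sum_congr rfl step1, Finset.sum_comm]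
  have step2 : ∀ l : Fin (2 * n - 1),
      ∑ k ∈ Finset.range (2 * n - 1), ∑ j : Fin n,
          t (aidx n l) * v j * ((2 * n - 1 : ℕ) : ℂ)⁻¹ *
              zetaRt n ^ ((k : ℤ) * ((l.val : ℤ) + (j.val : ℤ) - (i.val : ℤ)))
      = ∑ j : Fin n,
          (if ((2 * n - 1 : ℕ) : ℤ) ∣ ((l.val : ℤ) + (j.val : ℤ) - (i.val : ℤ))
            then t (aidx n l) * v j else 0) := by
    intro l
    rw [Finset.sum_comm]
    refine Finset.sum_congr rfl fun j _ => ?_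
    rw [← Finset.mul_sum, zetaRootSum n hn]
    split_ifs with hdvd
    · rw [mul_assoc, inv_mul_cancel₀ hmC, mul_one]
    · rw [mul_zero]
  rw [Finset.sum_congr rfl (fun l _ => step2 l), Finset.sum_comm]
  refine Finset.sum_congr rfl fun j _ => ?_
  have hi := i.isLt
  have hj := j.isLt
  rcases le_or_gt j.val i.val with hji | hji
  · rw [Finset.sum_eq_single (⟨i.val - j.val, by omega⟩ : Fin (2 * n - 1))]
    · rw [if_pos ⟨0, by simp only [Fin.val_mk]; omega⟩]
      have hidx : aidx n (⟨i.val - j.val, by omega⟩ : Fin (2 * n - 1))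
          = ⟨j.val + (n - 1) - i.val, by omega⟩ := by
        apply Fin.ext
        show (n - 1 + (2 * n - 1) - (i.val - j.val)) % (2 * n - 1) = j.val + (n - 1) - i.val
        have h1 : n - 1 + (2 * n - 1) - (i.val - j.val)
            = (j.val + (n - 1) - i.val) + (2 * n - 1) := by omega
        rw [h1, Nat.add_mod_right, Nat.mod_eq_of_lt (by omega)]
      rw [hidx]
    · intro b _ hb
      have hbl := b.isLt
      rw [if_neg]
      rintro ⟨c, hc⟩
      have hpin := int_pin2 (2 * n - 1) (by omega) _ c hc (by omega) (by omega)
      refine hb (Fin.ext ?_)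
      show b.val = i.val - j.val
      omega
    · intro hmem
      exact absurd (Finset.mem_univ _) hmem
  · rw [Finset.sum_eq_single (⟨i.val + (2 * n - 1) - j.val, by omega⟩ : Fin (2 * n - 1))]
    · rw [if_pos ⟨1, by simp only [Fin.val_mk]; omega⟩]
      have hidx : aidx n (⟨i.val + (2 * n - 1) - j.val, by omega⟩ : Fin (2 * n - 1))
          = ⟨j.val + (n - 1) - i.val, by omega⟩ := by
        apply Fin.ext
        show (n - 1 + (2 * n - 1) - (i.val + (2 * n - 1) - j.val)) % (2 * n - 1)
            = j.val + (n - 1) - i.val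
        rw [Nat.mod_eq_of_lt (by omega)]
        omega
      rw [hidx]
    · intro b _ hb
      have hbl := b.isLt
      rw [if_neg]
      rintro ⟨c, hc⟩
      have hpin := int_pin2 (2 * n - 1) (by omega) _ c hc (by omega) (by omega)
      refine hb (Fin.ext ?_)
      show b.val = i.val + (2 * n - 1) - j.val
      omega
    · intro hmem
      exact absurd (Finset.mem_univ _) hmem

lemma lemB (n : ℕ) (hn : 2 ≤ n) (h : Fin (2 * n - 1) → ℂ) (v : Fin n → ℂ) (i : Fin n) :
    ∑ k ∈ Finset.range (2 * n - 1),
      (∑ l : Fin (2 * n - 1), zetaRt n ^ (-((l.val * k : ℕ)) : ℤ) * h (bidx n l)) *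
        (∑ j : Fin n, zetaRt n ^ (j.val * k) * v j) *
          (((2 * n - 1 : ℕ) : ℂ)⁻¹ * zetaRt n ^ (i.val * k))
    = ∑ j : Fin n,
        h ⟨2 * n - 2 - i.val - j.val, by have := j.isLt; have := i.isLt; omega⟩ * v j := by
  have hm : (2 * n - 1) ≠ 0 := by omega
  have hmC : ((2 * n - 1 : ℕ) : ℂ) ≠ 0 := Nat.cast_ne_zero.mpr hm
  have hζ0 : zetaRt n ≠ 0 := zetaRt_ne_zero n
  have step1 : ∀ k ∈ Finset.range (2 * n - 1),
      (∑ l : Fin (2 * n - 1), zetaRt n ^ (-((l.val * k : ℕ)) : ℤ) * h (bidx n l)) *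
        (∑ j : Fin n, zetaRt n ^ (j.val * k) * v j) *
          (((2 * n - 1 : ℕ) : ℂ)⁻¹ * zetaRt n ^ (i.val * k))
      = ∑ l : Fin (2 * n - 1), ∑ j : Fin n,
          h (bidx n l) * v j * ((2 * n - 1 : ℕ) : ℂ)⁻¹ *
              zetaRt n ^ ((k : ℤ) * ((i.val : ℤ) + (j.val : ℤ) - (l.val : ℤ))) := by
    intro k _
    rw [Finset.sum_mul_sum, Finset.sum_mul]
    refine Finset.sum_congr rfl fun l _ => ?_
    rw [Finset.sum_mul]
    refine Finset.sum_congr rfl fun j _ => ?_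
    have hexp : ((k : ℤ) * ((i.val : ℤ) + (j.val : ℤ) - (l.val : ℤ)))
        = (-((l.val * k : ℕ)) : ℤ) + (((j.val * k : ℕ) : ℤ) + ((i.val * k : ℕ) : ℤ)) := by
      push_cast; ring
    rw [hexp, zpow_add₀ hζ0, zpow_add₀ hζ0, zpow_natCast, zpow_natCast]
    ring
  rw [Finset.sum_congr rfl step1, Finset.sum_comm]
  have step2 : ∀ l : Fin (2 * n - 1),
      ∑ k ∈ Finset.range (2 * n - 1), ∑ j : Fin n,
          h (bidx n l) * v j * ((2 * n - 1 : ℕ) : ℂ)⁻¹ *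
              zetaRt n ^ ((k : ℤ) * ((i.val : ℤ) + (j.val : ℤ) - (l.val : ℤ)))
      = ∑ j : Fin n,
          (if ((2 * n - 1 : ℕ) : ℤ) ∣ ((i.val : ℤ) + (j.val : ℤ) - (l.val : ℤ))
            then h (bidx n l) * v j else 0) := by
    intro l
    rw [Finset.sum_comm]
    refine Finset.sum_congr rfl fun j _ => ?_
    rw [← Finset.mul_sum, zetaRootSum n hn]
    split_ifs with hdvd
    · rw [mul_assoc, inv_mul_cancel₀ hmC, mul_one]
    · rw [mul_zero]
  rw [Finset.sum_congr rfl (fun l _ => step2 l), Finset.sum_comm]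
  refine Finset.sum_congr rfl fun j _ => ?_
  have hi := i.isLt
  have hj := j.isLt
  rw [Finset.sum_eq_single (⟨i.val + j.val, by omega⟩ : Fin (2 * n - 1))]
  · rw [if_pos ⟨0, by simp only [Fin.val_mk]; omega⟩]
    have hidx : bidx n (⟨i.val + j.val, by omega⟩ : Fin (2 * n - 1))
        = ⟨2 * n - 2 - i.val - j.val, by omega⟩ := by
      apply Fin.ext
      show 2 * n - 2 - (i.val + j.val) = 2 * n - 2 - i.val - j.val
      omega
    rw [hidx]
  · intro b _ hb
    have hbl := b.isLt
    rw [if_neg]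
    rintro ⟨c, hc⟩
    have hpin := int_pin2 (2 * n - 1) (by omega) _ c hc (by omega) (by omega)
    refine hb (Fin.ext ?_)
    show b.val = i.val + j.val
    omega
  · intro hmem
    exact absurd (Finset.mem_univ _) hmem

/-- the parameter functionals -/
noncomputable def Ufun (n : ℕ) (k : ℕ) :
    ((Fin (2 * n - 1) → ℂ) × (Fin (2 * n - 1) → ℂ)) →ₗ[ℂ] ℂ :=
  (lf2 (fun l : Fin (2 * n - 1) => if k < 2 * n - 1 then zetaRt n ^ (l.val * k) else 0)
      (aidx n)).comp (LinearMap.fst ℂ _ _)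
  + (lf2 (fun l : Fin (2 * n - 1) =>
      if k = 0 then 1
      else if 2 * n - 1 ≤ k then zetaRt n ^ (-((l.val * (k - (2 * n - 1) + 1) : ℕ)) : ℤ)
      else 0) (bidx n)).comp (LinearMap.snd ℂ _ _)

noncomputable def Psifun (n : ℕ) (k : ℕ) : (Fin n → ℂ) →ₗ[ℂ] ℂ :=
  lf2 (fun j : Fin n =>
    zetaRt n ^ (j.val * (if k < 2 * n - 1 then k else k - (2 * n - 1) + 1))) id

noncomputable def Wfun (n : ℕ) (k : ℕ) : Fin n → ℂ := fun i =>
  if k < 2 * n - 1 then ((2 * n - 1 : ℕ) : ℂ)⁻¹ * zetaRt n ^ (-((i.val * k : ℕ)) : ℤ)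
  else ((2 * n - 1 : ℕ) : ℂ)⁻¹ * zetaRt n ^ (i.val * (k - (2 * n - 1) + 1))

/-- the `n × n` Toeplitz-plus-Hankel matrix-vector product admits a
bilinear algorithm of length `4n - 3`, with linear functionals in the parameters
`(t, h) ∈ ℂ^(2n-1) × ℂ^(2n-1)`. -/
theorem toeplitz_plus_hankel_bilinear_algorithm_length (n : ℕ) (hn : 2 ≤ n) :
    ∃ u : Fin (4 * n - 3) → ((Fin (2 * n - 1) → ℂ) × (Fin (2 * n - 1) → ℂ)) →ₗ[ℂ] ℂ,
    ∃ ψ : Fin (4 * n - 3) → (Fin n → ℂ) →ₗ[ℂ] ℂ,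
    ∃ w : Fin (4 * n - 3) → Fin n → ℂ,
      ∀ (t h : Fin (2 * n - 1) → ℂ) (v : Fin n → ℂ),
        (toeplitzMat n t + hankelMat n h).mulVec v
          = ∑ j : Fin (4 * n - 3), (u j (t, h) * ψ j v) • w j := by
  refine ⟨fun j => Ufun n j.val, fun j => Psifun n j.val, fun j => Wfun n j.val, ?_⟩
  intro t h v
  funext i
  have hi := i.isLt
  simp only [Finset.sum_apply, Pi.smul_apply, smul_eq_mul]
  -- abbreviations for the two kinds of scalar terms
  set Tterm : ℕ → ℂ := fun k =>
    (∑ l : Fin (2 * n - 1), zetaRt n ^ (l.val * k) * t (aidx n l)) *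
      (∑ j : Fin n, zetaRt n ^ (j.val * k) * v j) *
        (((2 * n - 1 : ℕ) : ℂ)⁻¹ * zetaRt n ^ (-((i.val * k : ℕ)) : ℤ)) with hTterm
  set Hterm : ℕ → ℂ := fun k =>
    (∑ l : Fin (2 * n - 1), zetaRt n ^ (-((l.val * k : ℕ)) : ℤ) * h (bidx n l)) *
      (∑ j : Fin n, zetaRt n ^ (j.val * k) * v j) *
        (((2 * n - 1 : ℕ) : ℂ)⁻¹ * zetaRt n ^ (i.val * k)) with hHterm
  have key : ∀ j : Fin (4 * n - 3),
      Ufun n j.val (t, h) * Psifun n j.val v * Wfun n j.val i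
        = (if j.val < 2 * n - 1 then Tterm j.val else Hterm (j.val - (2 * n - 1) + 1))
          + (if j.val = 0 then Hterm 0 else 0) := by
    intro j
    have hjlt := j.isLt
    by_cases h0 : j.val = 0
    · have h1 : (0:ℕ) < 2 * n - 1 := by omega
      have h3 : ¬ (2 * n - 1 ≤ (0:ℕ)) := by omega
      rw [hTterm, hHterm]
      simp only [Ufun, Psifun, Wfun, LinearMap.add_apply, LinearMap.comp_apply,
        LinearMap.fst_apply, LinearMap.snd_apply, lf2_apply, id_eq, h0,
        if_pos h1, if_pos rfl, if_neg h3]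
      simp only [Nat.mul_zero, Nat.zero_mul, pow_zero, Nat.cast_zero, neg_zero, zpow_zero,
        mul_one, one_mul, mul_zero]
      norm_num
      ring
    · by_cases h2 : j.val < 2 * n - 1
      · have h3 : ¬ (2 * n - 1 ≤ j.val) := by omega
        rw [hTterm]
        simp only [Ufun, Psifun, Wfun, LinearMap.add_apply, LinearMap.comp_apply,
          LinearMap.fst_apply, LinearMap.snd_apply, lf2_apply, id_eq,
          if_pos h2, if_neg h0, if_neg h3]
        simp only [zero_mul, Finset.sum_const_zero, add_zero, mul_zero]
      · have h3 : 2 * n - 1 ≤ j.val := by omega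
        rw [hHterm]
        simp only [Ufun, Psifun, Wfun, LinearMap.add_apply, LinearMap.comp_apply,
          LinearMap.fst_apply, LinearMap.snd_apply, lf2_apply, id_eq,
          if_neg h2, if_neg h0, if_pos h3]
        simp only [zero_mul, Finset.sum_const_zero, zero_add, mul_zero, add_zero]
  rw [show (∑ j : Fin (4 * n - 3), Ufun n j.val (t, h) * Psifun n j.val v * Wfun n j.val i)
      = ∑ j : Fin (4 * n - 3),
          ((if j.val < 2 * n - 1 then Tterm j.val else Hterm (j.val - (2 * n - 1) + 1))
            + (if j.val = 0 then Hterm 0 else 0))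
    from Finset.sum_congr rfl fun j _ => key j]
  rw [Finset.sum_add_distrib]
  have hsplit2 : (∑ j : Fin (4 * n - 3), (if j.val = 0 then Hterm 0 else 0)) = Hterm 0 := by
    rw [Fin.sum_univ_eq_sum_range (fun k => if k = 0 then Hterm 0 else 0) (4 * n - 3)]
    rw [Finset.sum_ite_eq' (Finset.range (4 * n - 3)) 0 (fun _ => Hterm 0)]
    exact if_pos (Finset.mem_range.mpr (by omega))
  rw [hsplit2]
  rw [Fin.sum_univ_eq_sum_range
    (fun k => if k < 2 * n - 1 then Tterm k else Hterm (k - (2 * n - 1) + 1)) (4 * n - 3)]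
  have hM : 4 * n - 3 = (2 * n - 1) + (2 * n - 2) := by omega
  rw [hM, ← Finset.sum_range_add_sum_Ico _ (by omega : 2 * n - 1 ≤ (2 * n - 1) + (2 * n - 2))]
  have hfirst : ∑ k ∈ Finset.range (2 * n - 1),
      (if k < 2 * n - 1 then Tterm k else Hterm (k - (2 * n - 1) + 1))
      = ∑ k ∈ Finset.range (2 * n - 1), Tterm k := by
    refine Finset.sum_congr rfl fun k hk => ?_
    rw [if_pos (Finset.mem_range.mp hk)]
  have hsecond : ∑ k ∈ Finset.Ico (2 * n - 1) ((2 * n - 1) + (2 * n - 2)),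
      (if k < 2 * n - 1 then Tterm k else Hterm (k - (2 * n - 1) + 1))
      = ∑ k ∈ Finset.range (2 * n - 2), Hterm (k + 1) := by
    rw [Finset.sum_Ico_eq_sum_range]
    simp only [Nat.add_sub_cancel_left]
    refine Finset.sum_congr rfl fun k hk => ?_
    rw [if_neg (by omega)]
  rw [hfirst, hsecond]
  have hHsum : ∑ k ∈ Finset.range (2 * n - 2), Hterm (k + 1) + Hterm 0
      = ∑ k ∈ Finset.range (2 * n - 1), Hterm k := by
    have h1 : 2 * n - 1 = (2 * n - 2) + 1 := by omega
    rw [h1, Finset.sum_range_succ']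
  rw [add_assoc, hHsum]
  rw [hTterm, hHterm]
  rw [lemA n hn t v i, lemB n hn h v i]
  simp only [Matrix.mulVec, dotProduct, Matrix.add_apply, toeplitzMat, hankelMat,
    Matrix.of_apply, add_mul, Finset.sum_add_distrib]
end

section
/- Let n, m ≥ 1. There exist linear functionals u_1,…,u_{(2n−1)(2m−1)} : ℂ^{2n−1} × ℂ^{2m−1} → ℂ of the product form u_l(t,s) = φ_l(t)·χ_l(s) with φ_l, χ_l linear, linear functionals ψ_1,…,ψ_{(2n−1)(2m−1)} : ℂ^{nm} → ℂ, and vectors w_1,…,w_{(2n−1)(2m−1)} ∈ ℂ^{nm} such that for every t ∈ ℂ^{2n−1}, s ∈ ℂ^{2m−1}, and v ∈ ℂ^{nm}, (A ⊗ B)·v = Σ_{l=1}^{(2n−1)(2m−1)} φ_l(t)·χ_l(s)·ψ_l(v)·w_l, where A is the n×n Toeplitz matrix represented by t and B is the m×m Toeplitz matrix represented by s. That is, the two-level Toeplitz (BTTB) matrix-vector product admits a bilinear algorithm of length (2n−1)(2m−1). -/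
open Kronecker

noncomputable def dotL {ι : Type*} [Fintype ι] (c : ι → ℂ) : (ι → ℂ) →ₗ[ℂ] ℂ where
  toFun v := ∑ i, c i * v i
  map_add' x y := by simp [mul_add, Finset.sum_add_distrib]
  map_smul' a x := by
    simp only [Pi.smul_apply, smul_eq_mul, RingHom.id_apply, Finset.mul_sum]
    exact Finset.sum_congr rfl fun i _ => by ring

@[simp] lemma dotL_apply {ι : Type*} [Fintype ι] (c v : ι → ℂ) :
    dotL c v = ∑ i, c i * v i := rfl

lemma expsum (N : ℕ) (hN : 0 < N) (d : ℤ) (hd : d.natAbs < N) :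
    ∑ a : Fin N, Complex.exp (2 * Real.pi * Complex.I / N) ^ ((a : ℤ) * d)
      = if d = 0 then (N : ℂ) else 0 := by
  set ζ := Complex.exp (2 * Real.pi * Complex.I / N) with hζdef
  have hζ : IsPrimitiveRoot ζ N := Complex.isPrimitiveRoot_exp N hN.ne'
  have h1 : ∀ a : Fin N, ζ ^ ((a:ℤ) * d) = (ζ ^ d) ^ (a:ℕ) := fun a => by
    rw [mul_comm, zpow_mul, zpow_natCast]
  simp only [h1]
  rw [Fin.sum_univ_eq_sum_range (fun a => (ζ ^ d) ^ a) N]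
  by_cases h0 : d = 0
  · simp [h0]
  · have hnd : ¬ ((N:ℤ) ∣ d) := by
      intro hdvd
      have h2 : N ∣ d.natAbs := by simpa using Int.natAbs_dvd_natAbs.mpr hdvd
      have := Nat.le_of_dvd (by omega) h2
      omega
    have hz1 : ζ ^ d ≠ 1 := fun h => hnd ((hζ.zpow_eq_one_iff_dvd d).mp h)
    rw [geom_sum_eq hz1]
    have hpow : (ζ ^ d) ^ N = 1 := by
      rw [← zpow_natCast, ← zpow_mul, mul_comm, zpow_mul, zpow_natCast, hζ.pow_eq_one, one_zpow]
    simp [hpow, h0]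

lemma toeplitz_entry (n : ℕ) (hn : 1 ≤ n) (t : Fin (2 * n - 1) → ℂ) (i k : Fin n) :
    toeplitzMat n t i k
      = ∑ a : Fin (2 * n - 1),
          (∑ p : Fin (2 * n - 1),
              Complex.exp (2 * Real.pi * Complex.I / ((2 * n - 1 : ℕ) : ℂ))
                ^ ((a : ℤ) * (((p : ℕ) : ℤ) - ((n : ℤ) - 1))) * t p)
            * ((((2 * n - 1 : ℕ) : ℂ))⁻¹
                * Complex.exp (2 * Real.pi * Complex.I / ((2 * n - 1 : ℕ) : ℂ))
                    ^ ((a : ℤ) * ((i : ℕ) : ℤ))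
                * Complex.exp (2 * Real.pi * Complex.I / ((2 * n - 1 : ℕ) : ℂ))
                    ^ (-((a : ℤ) * ((k : ℕ) : ℤ)))) := by
  set ζ := Complex.exp (2 * Real.pi * Complex.I / ((2 * n - 1 : ℕ) : ℂ)) with hζdef
  have hne : ζ ≠ 0 := Complex.exp_ne_zero _
  have hNpos : 0 < 2 * n - 1 := by omega
  have hNne : ((2 * n - 1 : ℕ) : ℂ) ≠ 0 := Nat.cast_ne_zero.mpr (by omega)
  set D : Fin (2 * n - 1) → ℤ :=
    fun p => ((p : ℕ) : ℤ) - ((n : ℤ) - 1) + ((i : ℕ) : ℤ) - ((k : ℕ) : ℤ) with hD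
  set p0 : Fin (2 * n - 1) := ⟨k.val + (n - 1) - i.val, by
    have hi := i.isLt; have hj := k.isLt; omega⟩ with hp0
  have key : ∀ a : Fin (2 * n - 1), ∀ p : Fin (2 * n - 1),
      (ζ ^ ((a : ℤ) * (((p : ℕ) : ℤ) - ((n : ℤ) - 1))) * t p)
        * ((((2 * n - 1 : ℕ) : ℂ))⁻¹ * ζ ^ ((a : ℤ) * ((i : ℕ) : ℤ))
            * ζ ^ (-((a : ℤ) * ((k : ℕ) : ℤ))))
      = t p * (((2 * n - 1 : ℕ) : ℂ))⁻¹ * ζ ^ ((a : ℤ) * D p) := by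
    intro a p
    rw [show ((a : ℤ) * D p)
        = ((a : ℤ) * (((p : ℕ) : ℤ) - ((n : ℤ) - 1)))
          + (((a : ℤ) * ((i : ℕ) : ℤ)) + (-((a : ℤ) * ((k : ℕ) : ℤ)))) by rw [hD]; ring,
      zpow_add₀ hne, zpow_add₀ hne]
    ring
  calc toeplitzMat n t i k = t p0 := rfl
    _ = ∑ p : Fin (2 * n - 1), if p = p0 then t p0 else 0 := by
        rw [Finset.sum_ite_eq' Finset.univ p0 (fun _ => t p0)]; simp
    _ = ∑ p : Fin (2 * n - 1), ∑ a : Fin (2 * n - 1),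
          t p * (((2 * n - 1 : ℕ) : ℂ))⁻¹ * ζ ^ ((a : ℤ) * D p) := by
        refine Finset.sum_congr rfl fun p _ => ?_
        have hDv : D p = ((p : ℕ) : ℤ) - ((n : ℤ) - 1) + ((i : ℕ) : ℤ) - ((k : ℕ) : ℤ) := rfl
        rw [← Finset.mul_sum, expsum (2 * n - 1) hNpos (D p) (by
          have := p.isLt; have := i.isLt; have := k.isLt; omega)]
        by_cases hp : p = p0
        · have h1 : (p : ℕ) = k.val + (n - 1) - i.val := by rw [hp]
          have hD0 : D p = 0 := by
            have := i.isLt; have := k.isLt; omega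
          rw [if_pos hp, hD0, if_pos rfl, hp, mul_assoc, inv_mul_cancel₀ hNne, mul_one]
        · have hD0 : D p ≠ 0 := by
            intro h
            apply hp
            have hpv : p.val = k.val + (n - 1) - i.val := by
              have := i.isLt; have := k.isLt
              omega
            exact Fin.ext hpv
          rw [if_neg hp, if_neg hD0, mul_zero]
    _ = ∑ a : Fin (2 * n - 1), ∑ p : Fin (2 * n - 1),
          t p * (((2 * n - 1 : ℕ) : ℂ))⁻¹ * ζ ^ ((a : ℤ) * D p) := Finset.sum_comm
    _ = _ := by
        refine Finset.sum_congr rfl fun a _ => ?_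
        rw [Finset.sum_mul]
        exact Finset.sum_congr rfl fun p _ => (key a p).symm

/-- the two-level Toeplitz (BTTB) matrix-vector product admits a
bilinear algorithm of length `(2n-1)(2m-1)`, whose matrix functionals have the
product form `u_l(t,s) = φ_l(t)·χ_l(s)` with `φ_l, χ_l` linear. -/
theorem bttb_bilinear_algorithm_length (n m : ℕ) (hn : 1 ≤ n) (hm : 1 ≤ m) :
    ∃ φ : Fin ((2 * n - 1) * (2 * m - 1)) → (Fin (2 * n - 1) → ℂ) →ₗ[ℂ] ℂ,
    ∃ χ : Fin ((2 * n - 1) * (2 * m - 1)) → (Fin (2 * m - 1) → ℂ) →ₗ[ℂ] ℂ,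
    ∃ ψ : Fin ((2 * n - 1) * (2 * m - 1)) → (Fin n × Fin m → ℂ) →ₗ[ℂ] ℂ,
    ∃ w : Fin ((2 * n - 1) * (2 * m - 1)) → Fin n × Fin m → ℂ,
      ∀ (t : Fin (2 * n - 1) → ℂ) (s : Fin (2 * m - 1) → ℂ) (v : Fin n × Fin m → ℂ),
        ((toeplitzMat n t) ⊗ₖ (toeplitzMat m s)).mulVec v
          = ∑ l : Fin ((2 * n - 1) * (2 * m - 1)), (φ l t * χ l s * ψ l v) • w l := by
  classical
  refine ⟨
    fun l => dotL (fun p => Complex.exp (2 * Real.pi * Complex.I / ((2 * n - 1 : ℕ) : ℂ))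
      ^ (((((finProdFinEquiv.symm l).1 : Fin (2 * n - 1)) : ℕ) : ℤ)
          * (((p : ℕ) : ℤ) - ((n : ℤ) - 1)))),
    fun l => dotL (fun q => Complex.exp (2 * Real.pi * Complex.I / ((2 * m - 1 : ℕ) : ℂ))
      ^ (((((finProdFinEquiv.symm l).2 : Fin (2 * m - 1)) : ℕ) : ℤ)
          * (((q : ℕ) : ℤ) - ((m : ℤ) - 1)))),
    fun l => dotL (fun kl =>
      Complex.exp (2 * Real.pi * Complex.I / ((2 * n - 1 : ℕ) : ℂ))
        ^ (-(((((finProdFinEquiv.symm l).1 : Fin (2 * n - 1)) : ℕ) : ℤ) * ((kl.1 : ℕ) : ℤ)))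
      * Complex.exp (2 * Real.pi * Complex.I / ((2 * m - 1 : ℕ) : ℂ))
        ^ (-(((((finProdFinEquiv.symm l).2 : Fin (2 * m - 1)) : ℕ) : ℤ) * ((kl.2 : ℕ) : ℤ)))),
    fun l ij => ((2 * n - 1 : ℕ) : ℂ)⁻¹ * ((2 * m - 1 : ℕ) : ℂ)⁻¹
      * Complex.exp (2 * Real.pi * Complex.I / ((2 * n - 1 : ℕ) : ℂ))
        ^ (((((finProdFinEquiv.symm l).1 : Fin (2 * n - 1)) : ℕ) : ℤ) * ((ij.1 : ℕ) : ℤ))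
      * Complex.exp (2 * Real.pi * Complex.I / ((2 * m - 1 : ℕ) : ℂ))
        ^ (((((finProdFinEquiv.symm l).2 : Fin (2 * m - 1)) : ℕ) : ℤ) * ((ij.2 : ℕ) : ℤ)),
    ?_⟩
  intro t s v
  funext ij
  obtain ⟨i, j⟩ := ij
  set ζ := Complex.exp (2 * Real.pi * Complex.I / ((2 * n - 1 : ℕ) : ℂ)) with hζ
  set ξ := Complex.exp (2 * Real.pi * Complex.I / ((2 * m - 1 : ℕ) : ℂ)) with hξ
  rw [Finset.sum_apply]
  rw [← Equiv.sum_comp (finProdFinEquiv : Fin (2 * n - 1) × Fin (2 * m - 1) ≃ _)]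
  simp only [Equiv.symm_apply_apply, dotL_apply, Pi.smul_apply, smul_eq_mul]
  rw [Fintype.sum_prod_type]
  have hLHS : ((toeplitzMat n t ⊗ₖ toeplitzMat m s).mulVec v) (i, j)
      = ∑ kl : Fin n × Fin m,
          (toeplitzMat n t i kl.1 * toeplitzMat m s j kl.2) * v kl := by
    simp [Matrix.mulVec, dotProduct]
  rw [hLHS]
  calc
    ∑ kl : Fin n × Fin m, (toeplitzMat n t i kl.1 * toeplitzMat m s j kl.2) * v kl
      = ∑ kl : Fin n × Fin m, ∑ a : Fin (2 * n - 1), ∑ b : Fin (2 * m - 1),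
          ((∑ p : Fin (2 * n - 1), ζ ^ ((a : ℤ) * (((p : ℕ) : ℤ) - ((n : ℤ) - 1))) * t p)
              * ((((2 * n - 1 : ℕ) : ℂ))⁻¹ * ζ ^ ((a : ℤ) * ((i : ℕ) : ℤ))
                  * ζ ^ (-((a : ℤ) * ((kl.1 : ℕ) : ℤ)))))
          * ((∑ q : Fin (2 * m - 1), ξ ^ ((b : ℤ) * (((q : ℕ) : ℤ) - ((m : ℤ) - 1))) * s q)
              * ((((2 * m - 1 : ℕ) : ℂ))⁻¹ * ξ ^ ((b : ℤ) * ((j : ℕ) : ℤ))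
                  * ξ ^ (-((b : ℤ) * ((kl.2 : ℕ) : ℤ)))))
          * v kl := by
        refine Finset.sum_congr rfl fun kl _ => ?_
        rw [toeplitz_entry n hn t i kl.1, toeplitz_entry m hm s j kl.2,
          Finset.sum_mul_sum, Finset.sum_mul]
        exact Finset.sum_congr rfl fun a _ => by rw [Finset.sum_mul]
    _ = ∑ a : Fin (2 * n - 1), ∑ b : Fin (2 * m - 1), ∑ kl : Fin n × Fin m,
          ((∑ p : Fin (2 * n - 1), ζ ^ ((a : ℤ) * (((p : ℕ) : ℤ) - ((n : ℤ) - 1))) * t p)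
              * ((((2 * n - 1 : ℕ) : ℂ))⁻¹ * ζ ^ ((a : ℤ) * ((i : ℕ) : ℤ))
                  * ζ ^ (-((a : ℤ) * ((kl.1 : ℕ) : ℤ)))))
          * ((∑ q : Fin (2 * m - 1), ξ ^ ((b : ℤ) * (((q : ℕ) : ℤ) - ((m : ℤ) - 1))) * s q)
              * ((((2 * m - 1 : ℕ) : ℂ))⁻¹ * ξ ^ ((b : ℤ) * ((j : ℕ) : ℤ))
                  * ξ ^ (-((b : ℤ) * ((kl.2 : ℕ) : ℤ)))))
          * v kl := by
        rw [Finset.sum_comm]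
        exact Finset.sum_congr rfl fun a _ => Finset.sum_comm
    _ = ∑ a : Fin (2 * n - 1), ∑ b : Fin (2 * m - 1),
          ((∑ p : Fin (2 * n - 1), ζ ^ ((a : ℤ) * (((p : ℕ) : ℤ) - ((n : ℤ) - 1))) * t p)
            * (∑ q : Fin (2 * m - 1), ξ ^ ((b : ℤ) * (((q : ℕ) : ℤ) - ((m : ℤ) - 1))) * s q)
            * (∑ kl : Fin n × Fin m,
                ζ ^ (-((a : ℤ) * ((kl.1 : ℕ) : ℤ))) * ξ ^ (-((b : ℤ) * ((kl.2 : ℕ) : ℤ)))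
                  * v kl))
          * (((2 * n - 1 : ℕ) : ℂ)⁻¹ * ((2 * m - 1 : ℕ) : ℂ)⁻¹
              * ζ ^ ((a : ℤ) * ((i : ℕ) : ℤ)) * ξ ^ ((b : ℤ) * ((j : ℕ) : ℤ))) := by
        refine Finset.sum_congr rfl fun a _ => Finset.sum_congr rfl fun b _ => ?_
        conv_rhs => rw [Finset.mul_sum, Finset.sum_mul]
        exact Finset.sum_congr rfl fun kl _ => by ring
end
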